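/- Let H > 0, ρ > 0, and let ν : ℝ³ → ℝ be measurable with ν_m(1+|v|) ≤ ν(v) ≤ ν_M(1+|v|) for constants 0 < ν_m ≤ ν_M. Suppose g ∈ L²((0,H); L²(M dv)) is a (weak) solution of v_z ∂_z g + ρ ν(v) g = 0 on (0,H) × ℝ³ satisfying the diffuse reflection boundary conditions g(0, v) = √(2π) ∫_{w_z<0} |w_z| g(0, w) M(w) dw for v_z > 0 and g(H, v) = √(2π) ∫_{w_z>0} w_z g(H, w) M(w) dw for v_z < 0. Then g = 0; consequently, for each h ∈ L²((0,H); L²(M dv)) the problem v_z ∂_z g + ρ ν g = h with these boundary conditions has at most one solution in L²((0,H); L²(M dv)). -/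

import Mathlib

open Set MeasureTheory

/-- The normalized Maxwellian `M(v) = (2π)^{-3/2} exp(−|v|²/2)` on `ℝ³`. -/
noncomputable def Maxw (v : ℝ × ℝ × ℝ) : ℝ :=
  (2 * Real.pi) ^ (-(3:ℝ) / 2) * Real.exp (-(v.1 ^ 2 + v.2.1 ^ 2 + v.2.2 ^ 2) / 2)

lemma gauss_eq : (fun x : ℝ => Real.exp (-(1/2) * x ^ 2)) = fun x => Real.exp (-x^2/2) := by
  funext x; ring_nf

lemma gauss_integrable : Integrable (fun x : ℝ => Real.exp (-x^2/2)) := by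
  rw [← gauss_eq]; exact integrable_exp_neg_mul_sq (by norm_num)

lemma gauss_int : ∫ x : ℝ, Real.exp (-x^2/2) = Real.sqrt (2*Real.pi) := by
  rw [← gauss_eq, integral_gaussian, show (Real.pi/(1/2)) = 2*Real.pi by ring]

lemma xgauss_integrable : Integrable (fun x : ℝ => |x| * Real.exp (-x^2/2)) := by
  have h := (integrable_mul_exp_neg_mul_sq (by norm_num : (0:ℝ) < 1/2)).abs
  refine h.congr ?_
  filter_upwards with x
  rw [abs_mul, abs_of_nonneg (Real.exp_pos _).le]
  ring_nf

lemma xgauss_Ioi : ∫ x in Ioi (0:ℝ), |x| * Real.exp (-x^2/2) = 1 := by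
  have h1 : ∫ x in Ioi (0:ℝ), x * Real.exp (-x^2/2) = 1 := by
    have : ∫ x in Ioi (0:ℝ), x * Real.exp (-x^2/2) = 0 - (-Real.exp (-(0:ℝ)^2/2)) := by
      refine integral_Ioi_of_hasDerivAt_of_tendsto
        (f := fun x => -Real.exp (-x^2/2)) (f' := fun x => x * Real.exp (-x^2/2)) ?_ ?_ ?_ ?_
      · exact (Real.continuous_exp.comp (by continuity)).neg.continuousWithinAt
      · intro x _
        have h3 : HasDerivAt (fun x : ℝ => -x^2/2) (-x) x := by
          have := ((hasDerivAt_pow 2 x).neg).div_const (2:ℝ)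
          exact this.congr_deriv (by push_cast; ring)
        have h4 := (h3.exp).neg
        exact h4.congr_deriv (by ring)
      · have h5 := integrable_mul_exp_neg_mul_sq (by norm_num : (0:ℝ) < 1/2)
        exact (h5.congr (by filter_upwards with x; ring_nf)).integrableOn
      · have : Filter.Tendsto (fun x : ℝ => -x^2/2) Filter.atTop Filter.atBot := by
          apply Filter.Tendsto.atBot_div_const (by norm_num)
          exact Filter.tendsto_neg_atBot_iff.mpr (Filter.tendsto_pow_atTop (by norm_num))
        simpa using (Real.tendsto_exp_atBot.comp this).neg
    simpa using this
  rw [← h1]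
  apply setIntegral_congr_fun measurableSet_Ioi
  intro x hx; dsimp only; rw [abs_of_pos hx]

lemma xgauss_Iio : ∫ x in Iio (0:ℝ), |x| * Real.exp (-x^2/2) = 1 := by
  rw [← integral_Iic_eq_integral_Iio, ← xgauss_Ioi,
    show Ioi (0:ℝ) = Ioi (-(0:ℝ)) by norm_num,
    ← integral_comp_neg_Iic (0:ℝ) (fun x => |x| * Real.exp (-x^2/2))]
  simp only [abs_neg, neg_sq]

lemma maxw_eq (v : ℝ×ℝ×ℝ) : Maxw v = (2*Real.pi) ^ (-(3:ℝ)/2) *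
    (Real.exp (-v.1^2/2) * (Real.exp (-v.2.1^2/2) * Real.exp (-v.2.2^2/2))) := by
  unfold Maxw
  rw [← Real.exp_add, ← Real.exp_add]
  ring_nf

lemma maxw_pos (v : ℝ×ℝ×ℝ) : 0 < Maxw v := by
  unfold Maxw
  positivity

lemma set_eq (T : Set ℝ) : {w : ℝ×ℝ×ℝ | w.2.2 ∈ T} =
    (univ : Set ℝ) ×ˢ ((univ : Set ℝ) ×ˢ T) := by
  ext w; simp [Set.mem_prod]

lemma restrict3_eq (T : Set ℝ) :
    (volume : Measure (ℝ×ℝ×ℝ)).restrict {w | w.2.2 ∈ T} =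
    (volume : Measure ℝ).prod ((volume : Measure ℝ).prod ((volume : Measure ℝ).restrict T)) := by
  rw [set_eq, Measure.volume_eq_prod, ← Measure.prod_restrict, Measure.restrict_univ,
    Measure.volume_eq_prod, ← Measure.prod_restrict, Measure.restrict_univ]

lemma int3 (T : Set ℝ) (f g k : ℝ → ℝ) :
    ∫ w in {w : ℝ×ℝ×ℝ | w.2.2 ∈ T}, f w.1 * (g w.2.1 * k w.2.2) =
    (∫ x, f x) * ((∫ x, g x) * (∫ x in T, k x)) := by
  rw [restrict3_eq]
  rw [integral_prod_mul f (fun p : ℝ×ℝ => g p.1 * k p.2), integral_prod_mul]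

lemma integrable3 (T : Set ℝ) (f g k : ℝ → ℝ) (hf : Integrable f) (hg : Integrable g)
    (hk : IntegrableOn k T) :
    IntegrableOn (fun w : ℝ×ℝ×ℝ => f w.1 * (g w.2.1 * k w.2.2)) {w | w.2.2 ∈ T} := by
  rw [IntegrableOn, restrict3_eq]
  exact hf.mul_prod (hg.mul_prod hk)

lemma maxw_prod_form : (fun w : ℝ×ℝ×ℝ => |w.2.2| * Maxw w) =
    fun w => ((2*Real.pi) ^ (-(3:ℝ)/2) * Real.exp (-w.1^2/2)) *
      (Real.exp (-w.2.1^2/2) * (|w.2.2| * Real.exp (-w.2.2^2/2))) := by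
  funext w; rw [maxw_eq]; ring

lemma maxw_abs_integrable (T : Set ℝ) :
    IntegrableOn (fun w : ℝ×ℝ×ℝ => |w.2.2| * Maxw w) {w | w.2.2 ∈ T} := by
  refine (integrable3 T (fun x => (2*Real.pi) ^ (-(3:ℝ)/2) * Real.exp (-x^2/2))
    (fun x => Real.exp (-x^2/2)) (fun x => |x| * Real.exp (-x^2/2))
    (gauss_integrable.const_mul _) gauss_integrable xgauss_integrable.integrableOn).congr ?_
  filter_upwards with w
  rw [maxw_eq]; ring

lemma int_side (T : Set ℝ) (hT : ∫ x in T, |x| * Real.exp (-x^2/2) = 1) :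
    ∫ w in {w : ℝ×ℝ×ℝ | w.2.2 ∈ T}, |w.2.2| * Maxw w = (Real.sqrt (2*Real.pi))⁻¹ := by
  rw [maxw_prod_form, int3 T (fun x => (2*Real.pi) ^ (-(3:ℝ)/2) * Real.exp (-x^2/2)) (fun x => Real.exp (-x^2/2)) (fun x => |x| * Real.exp (-x^2/2)), integral_const_mul, gauss_int, hT, mul_one,
    mul_assoc, Real.mul_self_sqrt (by positivity)]
  have h2 : (0:ℝ) < 2*Real.pi := by positivity
  rw [← Real.rpow_add_one (ne_of_gt h2), Real.sqrt_eq_rpow, ← Real.rpow_neg h2.le]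
  norm_num

lemma nullset : (volume : Measure (ℝ×ℝ×ℝ)) {w : ℝ×ℝ×ℝ | w.2.2 = 0} = 0 := by
  have h : {w : ℝ×ℝ×ℝ | w.2.2 = 0} = {w : ℝ×ℝ×ℝ | w.2.2 ∈ ({0} : Set ℝ)} := rfl
  rw [h, set_eq, Measure.volume_eq_prod, Measure.prod_prod, Measure.volume_eq_prod, Measure.prod_prod]
  simp

lemma ode_exp {Hh c : ℝ} {f : ℝ → ℝ}
    (hf : ∀ z ∈ Icc 0 Hh, HasDerivWithinAt f (-(c * f z)) (Icc 0 Hh) z) :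
    ∀ z ∈ Icc (0:ℝ) Hh, f z = f 0 * Real.exp (-(c * z)) := by
  intro z hz
  set F := fun z => f z * Real.exp (c * z) with hF
  have hcont : ContinuousOn F (Icc 0 Hh) := fun x hx =>
    ((hf x hx).continuousWithinAt).mul
      ((Real.continuous_exp.comp (continuous_const.mul continuous_id)).continuousWithinAt)
  have hder : ∀ x ∈ Ico (0:ℝ) Hh, HasDerivWithinAt F 0 (Ici x) x := by
    intro x hx
    have hexp : HasDerivAt (fun y : ℝ => Real.exp (c * y)) (Real.exp (c * x) * c) x := by
      simpa using ((hasDerivAt_id x).const_mul c).exp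
    have h1 : HasDerivWithinAt F (-(c * f x) * Real.exp (c*x) + f x * (Real.exp (c*x) * c))
        (Icc 0 Hh) x := (hf x ⟨hx.1, hx.2.le⟩).mul hexp.hasDerivWithinAt
    have h2 : (-(c * f x) * Real.exp (c*x) + f x * (Real.exp (c*x) * c)) = 0 := by ring
    rw [h2] at h1
    refine h1.mono_of_mem_nhdsWithin ?_
    rw [mem_nhdsWithin]
    exact ⟨Iio Hh, isOpen_Iio, hx.2, fun y hy => ⟨hx.1.trans hy.2, hy.1.le⟩⟩
  have hc := constant_of_has_deriv_right_zero hcont hder z hz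
  have h0 : F 0 = f 0 := by simp [hF]
  have hz' : F z = f 0 := by rw [hc, h0]
  have : f z * Real.exp (c * z) = f 0 := hz'
  rw [Real.exp_neg]
  field_simp [Real.exp_ne_zero] at this ⊢
  linarith [this]

lemma abs_setIntegral_le (T : Set ℝ) (hT : MeasurableSet T)
    (hTint : ∫ x in T, |x| * Real.exp (-x^2/2) = 1)
    (ψ φ : (ℝ×ℝ×ℝ) → ℝ) (C : ℝ) (hC : 0 ≤ C)
    (habs : ∀ w, |ψ w| = |w.2.2| * |φ w| * Maxw w)
    (hint : Integrable (fun w : ℝ×ℝ×ℝ => |w.2.2| * |φ w| * Maxw w))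
    (hbd : ∀ᵐ w : ℝ×ℝ×ℝ, w.2.2 ∈ T → |φ w| ≤ C) :
    |∫ w in {w : ℝ×ℝ×ℝ | w.2.2 ∈ T}, ψ w| ≤ C * (Real.sqrt (2*Real.pi))⁻¹ := by
  have hSmeas : MeasurableSet {w : ℝ×ℝ×ℝ | w.2.2 ∈ T} := hT.preimage (measurable_snd.snd)
  have h1 : |∫ w in {w : ℝ×ℝ×ℝ | w.2.2 ∈ T}, ψ w| ≤ ∫ w in {w : ℝ×ℝ×ℝ | w.2.2 ∈ T}, |ψ w| := by
    simpa [Real.norm_eq_abs] using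
      norm_integral_le_integral_norm (μ := volume.restrict {w : ℝ×ℝ×ℝ | w.2.2 ∈ T}) ψ
  have h2 : ∫ w in {w : ℝ×ℝ×ℝ | w.2.2 ∈ T}, |ψ w| ≤
      ∫ w in {w : ℝ×ℝ×ℝ | w.2.2 ∈ T}, C * (|w.2.2| * Maxw w) := by
    apply integral_mono_ae
    · exact (hint.integrableOn).congr (Filter.Eventually.of_forall fun w => (habs w).symm)
    · exact (maxw_abs_integrable T).const_mul C
    · rw [Filter.EventuallyLE, ae_restrict_iff' hSmeas]
      filter_upwards [hbd] with w hw hwT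
      rw [habs]
      have h3 := hw hwT
      nlinarith [mul_nonneg (mul_nonneg (sub_nonneg.2 h3) (abs_nonneg w.2.2)) (maxw_pos w).le]
  rw [integral_const_mul, int_side T hTint] at h2
  linarith

lemma homog (H ρ νm : ℝ) (hH : 0 < H) (hρ : 0 < ρ) (hνm : 0 < νm)
    (ν : ℝ × ℝ × ℝ → ℝ)
    (hlow : ∀ v : ℝ×ℝ×ℝ, νm * (1 + Real.sqrt (v.1 ^ 2 + v.2.1 ^ 2 + v.2.2 ^ 2)) ≤ ν v)
    (g : ℝ → (ℝ × ℝ × ℝ) → ℝ)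
    (hderiv : ∀ᵐ v : ℝ × ℝ × ℝ, v.2.2 ≠ 0 → ∀ z ∈ Icc (0:ℝ) H,
      HasDerivWithinAt (fun z' => g z' v) (-(ρ * ν v * g z v) / v.2.2) (Icc 0 H) z)
    (hint0 : Integrable (fun w : ℝ × ℝ × ℝ => |w.2.2| * |g 0 w| * Maxw w))
    (hintH : Integrable (fun w : ℝ × ℝ × ℝ => |w.2.2| * |g H w| * Maxw w))
    (hb0 : ∀ᵐ v : ℝ × ℝ × ℝ, 0 < v.2.2 →
      g 0 v = Real.sqrt (2 * Real.pi) *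
        ∫ w in {w : ℝ × ℝ × ℝ | w.2.2 < 0}, |w.2.2| * g 0 w * Maxw w)
    (hbH : ∀ᵐ v : ℝ × ℝ × ℝ, v.2.2 < 0 →
      g H v = Real.sqrt (2 * Real.pi) *
        ∫ w in {w : ℝ × ℝ × ℝ | 0 < w.2.2}, w.2.2 * g H w * Maxw w) :
    ∀ᵐ v : ℝ × ℝ × ℝ, ∀ z ∈ Icc (0:ℝ) H, g z v = 0 := by
  set θ := Real.exp (-(ρ * νm * H)) with hθdef
  have hθpos : 0 < θ := Real.exp_pos _
  have hθlt : θ < 1 := Real.exp_lt_one_iff.mpr (by nlinarith [mul_pos (mul_pos hρ hνm) hH])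
  set c0 := Real.sqrt (2 * Real.pi) *
    ∫ w in {w : ℝ × ℝ × ℝ | w.2.2 < 0}, |w.2.2| * g 0 w * Maxw w with hc0def
  set cH := Real.sqrt (2 * Real.pi) *
    ∫ w in {w : ℝ × ℝ × ℝ | 0 < w.2.2}, w.2.2 * g H w * Maxw w with hcHdef
  have hne : ∀ᵐ v : ℝ × ℝ × ℝ, v.2.2 ≠ 0 := by
    rw [ae_iff]; simpa using nullset
  have hsol : ∀ᵐ v : ℝ × ℝ × ℝ, v.2.2 ≠ 0 → ∀ z ∈ Icc (0:ℝ) H,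
      g z v = g 0 v * Real.exp (-(ρ * ν v / v.2.2 * z)) := by
    filter_upwards [hderiv] with v hd hv
    have hd2 : ∀ z ∈ Icc (0:ℝ) H, HasDerivWithinAt (fun z' => g z' v)
        (-(ρ * ν v / v.2.2 * g z v)) (Icc 0 H) z := by
      intro z hz
      have h2 : -(ρ * ν v * g z v) / v.2.2 = -(ρ * ν v / v.2.2 * g z v) := by
        field_simp
      exact h2 ▸ hd hv z hz
    exact ode_exp hd2
  have hHmem : H ∈ Icc (0:ℝ) H := ⟨hH.le, le_refl H⟩
  have hν_ge : ∀ v : ℝ×ℝ×ℝ, νm * |v.2.2| ≤ ν v := by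
    intro v
    have h1 : |v.2.2| ≤ Real.sqrt (v.1 ^ 2 + v.2.1 ^ 2 + v.2.2 ^ 2) := by
      rw [← Real.sqrt_sq_eq_abs]
      exact Real.sqrt_le_sqrt (by nlinarith [sq_nonneg v.1, sq_nonneg v.2.1])
    calc νm * |v.2.2| ≤ νm * (1 + Real.sqrt (v.1^2+v.2.1^2+v.2.2^2)) := by nlinarith
      _ ≤ ν v := hlow v
  have hgH : ∀ᵐ w : ℝ×ℝ×ℝ, 0 < w.2.2 → |g H w| ≤ θ * |c0| := by
    filter_upwards [hsol, hb0] with w hs h0 hw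
    have hform := hs (ne_of_gt hw) H hHmem
    rw [h0 hw] at hform
    have habs : |g H w| = |c0| * Real.exp (-(ρ * ν w / w.2.2 * H)) := by
      rw [hform, abs_mul, abs_of_nonneg (Real.exp_pos _).le]
    rw [habs]
    have hexp : Real.exp (-(ρ * ν w / w.2.2 * H)) ≤ θ := by
      apply Real.exp_le_exp.mpr
      have h3 : νm ≤ ν w / w.2.2 := by
        rw [le_div_iff₀ hw]
        calc νm * w.2.2 = νm * |w.2.2| := by rw [abs_of_pos hw]
          _ ≤ ν w := hν_ge w
      rw [mul_div_assoc]
      linarith [mul_le_mul_of_nonneg_right (mul_le_mul_of_nonneg_left h3 hρ.le) hH.le]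
    nlinarith [abs_nonneg c0, Real.exp_pos (-(ρ * ν w / w.2.2 * H)),
      mul_le_mul_of_nonneg_left hexp (abs_nonneg c0)]
  have hg0 : ∀ᵐ w : ℝ×ℝ×ℝ, w.2.2 < 0 → |g 0 w| ≤ θ * |cH| := by
    filter_upwards [hsol, hbH] with w hs hbw hw
    have hform := hs (ne_of_lt hw) H hHmem
    have hginv : g 0 w = g H w * Real.exp (ρ * ν w / w.2.2 * H) := by
      rw [hform, mul_assoc, ← Real.exp_add]
      simp
    rw [hginv, hbw hw, abs_mul, abs_of_nonneg (Real.exp_pos _).le]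
    have hexp : Real.exp (ρ * ν w / w.2.2 * H) ≤ θ := by
      apply Real.exp_le_exp.mpr
      have h3 : ν w / w.2.2 ≤ -νm := by
        rw [div_le_iff_of_neg hw]
        calc -νm * w.2.2 = νm * |w.2.2| := by rw [abs_of_neg hw]; ring
          _ ≤ ν w := hν_ge w
      rw [mul_div_assoc]
      linarith [mul_le_mul_of_nonneg_right (mul_le_mul_of_nonneg_left h3 hρ.le) hH.le]
    nlinarith [abs_nonneg cH, Real.exp_pos (ρ * ν w / w.2.2 * H),
      mul_le_mul_of_nonneg_left hexp (abs_nonneg cH)]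
  -- |cH| ≤ θ * |c0|
  have hcHle : |cH| ≤ θ * |c0| := by
    have h := abs_setIntegral_le (Ioi 0) measurableSet_Ioi xgauss_Ioi
      (fun w => w.2.2 * g H w * Maxw w) (fun w => g H w) (θ * |c0|)
      (by positivity)
      (fun w => by rw [abs_mul, abs_mul, abs_of_nonneg (maxw_pos w).le])
      hintH hgH
    have hIeq : {w : ℝ×ℝ×ℝ | w.2.2 ∈ Ioi 0} = {w : ℝ×ℝ×ℝ | 0 < w.2.2} := rfl
    rw [hIeq] at h
    rw [hcHdef, abs_mul, abs_of_nonneg (Real.sqrt_nonneg _)]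
    have hsq : (0:ℝ) < Real.sqrt (2*Real.pi) := Real.sqrt_pos.mpr (by positivity)
    calc Real.sqrt (2*Real.pi) * |∫ w in {w : ℝ×ℝ×ℝ | 0 < w.2.2}, w.2.2 * g H w * Maxw w|
        ≤ Real.sqrt (2*Real.pi) * ((θ * |c0|) * (Real.sqrt (2*Real.pi))⁻¹) :=
          mul_le_mul_of_nonneg_left h hsq.le
      _ = θ * |c0| := by field_simp
  have hc0le : |c0| ≤ θ * |cH| := by
    have h := abs_setIntegral_le (Iio 0) measurableSet_Iio xgauss_Iio
      (fun w => |w.2.2| * g 0 w * Maxw w) (fun w => g 0 w) (θ * |cH|)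
      (by positivity)
      (fun w => by rw [abs_mul, abs_mul, abs_abs, abs_of_nonneg (maxw_pos w).le])
      hint0 hg0
    have hIeq : {w : ℝ×ℝ×ℝ | w.2.2 ∈ Iio 0} = {w : ℝ×ℝ×ℝ | w.2.2 < 0} := rfl
    rw [hIeq] at h
    rw [hc0def, abs_mul, abs_of_nonneg (Real.sqrt_nonneg _)]
    have hsq : (0:ℝ) < Real.sqrt (2*Real.pi) := Real.sqrt_pos.mpr (by positivity)
    calc Real.sqrt (2*Real.pi) * |∫ w in {w : ℝ×ℝ×ℝ | w.2.2 < 0}, |w.2.2| * g 0 w * Maxw w|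
        ≤ Real.sqrt (2*Real.pi) * ((θ * |cH|) * (Real.sqrt (2*Real.pi))⁻¹) :=
          mul_le_mul_of_nonneg_left h hsq.le
      _ = θ * |cH| := by field_simp
  have hc0z : c0 = 0 := by
    rw [← abs_eq_zero]
    nlinarith [abs_nonneg c0, abs_nonneg cH]
  have hcHz : cH = 0 := by
    rw [← abs_eq_zero]
    rw [hc0z] at hcHle
    simp only [abs_zero, mul_zero] at hcHle
    linarith [abs_nonneg cH]
  filter_upwards [hsol, hb0, hbH, hne] with v hs h0 hHv hvne
  intro z hz
  rcases hvne.lt_or_gt with hneg | hpos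
  · have h5 := hHv hneg
    rw [hcHz] at h5
    have h6 : g 0 v * Real.exp (-(ρ * ν v / v.2.2 * H)) = 0 := by
      rw [← hs hvne H hHmem, h5]
    have h4 : g 0 v = 0 := by
      rcases mul_eq_zero.mp h6 with h | h
      · exact h
      · exact absurd h (Real.exp_ne_zero _)
    rw [hs hvne z hz, h4, zero_mul]
  · rw [hs hvne z hz, (h0 hpos).trans hc0z, zero_mul]

lemma maxw_meas : Measurable Maxw := by
  unfold Maxw; fun_prop

lemma integrable_signed_abs (S : Set (ℝ×ℝ×ℝ)) (φ : (ℝ×ℝ×ℝ)→ℝ) (hφ : Measurable φ)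
    (hint : Integrable (fun w : ℝ×ℝ×ℝ => |w.2.2| * |φ w| * Maxw w)) :
    IntegrableOn (fun w : ℝ×ℝ×ℝ => |w.2.2| * φ w * Maxw w) S := by
  refine Integrable.mono' hint.restrict
    (((measurable_snd.snd.abs.mul hφ).mul maxw_meas).aestronglyMeasurable)
    (Filter.Eventually.of_forall fun w => ?_)
  rw [Real.norm_eq_abs, abs_mul, abs_mul, abs_abs, abs_of_nonneg (maxw_pos w).le]

lemma integrable_signed (S : Set (ℝ×ℝ×ℝ)) (φ : (ℝ×ℝ×ℝ)→ℝ) (hφ : Measurable φ)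
    (hint : Integrable (fun w : ℝ×ℝ×ℝ => |w.2.2| * |φ w| * Maxw w)) :
    IntegrableOn (fun w : ℝ×ℝ×ℝ => w.2.2 * φ w * Maxw w) S := by
  refine Integrable.mono' hint.restrict
    (((measurable_snd.snd.mul hφ).mul maxw_meas).aestronglyMeasurable)
    (Filter.Eventually.of_forall fun w => ?_)
  rw [Real.norm_eq_abs, abs_mul, abs_mul, abs_of_nonneg (maxw_pos w).le]

lemma abs_test (a b : ℝ) : |a - b| ≤ |a| + |b| := abs_sub a b

/-- Uniqueness for the damped transport equation `v_z ∂_z g + ρ ν(v) g = h` on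
`(0,H) × ℝ³` with diffuse reflection boundary conditions at `z = 0` and `z = H`:
any `L²((0,H); L²(M dv))` solution of the homogeneous problem (`h = 0`) vanishes,
and consequently the inhomogeneous problem has at most one solution. -/
theorem damped_transport_diffuse_reflection_uniqueness
    (H ρ νm νM : ℝ) (hH : 0 < H) (hρ : 0 < ρ) (hνm : 0 < νm) (hmM : νm ≤ νM)
    (ν : ℝ × ℝ × ℝ → ℝ) (hν : Measurable ν)
    (hbounds : ∀ v : ℝ × ℝ × ℝ,
      νm * (1 + Real.sqrt (v.1 ^ 2 + v.2.1 ^ 2 + v.2.2 ^ 2)) ≤ ν v ∧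
      ν v ≤ νM * (1 + Real.sqrt (v.1 ^ 2 + v.2.1 ^ 2 + v.2.2 ^ 2))) :
    -- homogeneous problem: the only solution is `g = 0`
    (∀ g : ℝ → (ℝ × ℝ × ℝ) → ℝ,
      Measurable (Function.uncurry g) →
      IntegrableOn (fun p : ℝ × (ℝ × ℝ × ℝ) => (g p.1 p.2) ^ 2 * Maxw p.2)
        (Ioo 0 H ×ˢ univ) →
      (∀ᵐ v : ℝ × ℝ × ℝ, v.2.2 ≠ 0 → ∀ z ∈ Icc (0:ℝ) H,
        HasDerivWithinAt (fun z' => g z' v) (-(ρ * ν v * g z v) / v.2.2) (Icc 0 H) z) →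
      Integrable (fun w : ℝ × ℝ × ℝ => |w.2.2| * |g 0 w| * Maxw w) →
      Integrable (fun w : ℝ × ℝ × ℝ => |w.2.2| * |g H w| * Maxw w) →
      (∀ᵐ v : ℝ × ℝ × ℝ, 0 < v.2.2 →
        g 0 v = Real.sqrt (2 * Real.pi) *
          ∫ w in {w : ℝ × ℝ × ℝ | w.2.2 < 0}, |w.2.2| * g 0 w * Maxw w) →
      (∀ᵐ v : ℝ × ℝ × ℝ, v.2.2 < 0 →
        g H v = Real.sqrt (2 * Real.pi) *
          ∫ w in {w : ℝ × ℝ × ℝ | 0 < w.2.2}, w.2.2 * g H w * Maxw w) →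
      (∀ᵐ v : ℝ × ℝ × ℝ, ∀ z ∈ Icc (0:ℝ) H, g z v = 0)) ∧
    -- consequence: at most one solution of the inhomogeneous problem
    (∀ h : ℝ → (ℝ × ℝ × ℝ) → ℝ,
      IntegrableOn (fun p : ℝ × (ℝ × ℝ × ℝ) => (h p.1 p.2) ^ 2 * Maxw p.2)
        (Ioo 0 H ×ˢ univ) →
      ∀ g₁ g₂ : ℝ → (ℝ × ℝ × ℝ) → ℝ,
      Measurable (Function.uncurry g₁) → Measurable (Function.uncurry g₂) →
      IntegrableOn (fun p : ℝ × (ℝ × ℝ × ℝ) => (g₁ p.1 p.2) ^ 2 * Maxw p.2)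
        (Ioo 0 H ×ˢ univ) →
      IntegrableOn (fun p : ℝ × (ℝ × ℝ × ℝ) => (g₂ p.1 p.2) ^ 2 * Maxw p.2)
        (Ioo 0 H ×ˢ univ) →
      (∀ᵐ v : ℝ × ℝ × ℝ, v.2.2 ≠ 0 → ∀ z ∈ Icc (0:ℝ) H,
        HasDerivWithinAt (fun z' => g₁ z' v) ((h z v - ρ * ν v * g₁ z v) / v.2.2)
          (Icc 0 H) z) →
      (∀ᵐ v : ℝ × ℝ × ℝ, v.2.2 ≠ 0 → ∀ z ∈ Icc (0:ℝ) H,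
        HasDerivWithinAt (fun z' => g₂ z' v) ((h z v - ρ * ν v * g₂ z v) / v.2.2)
          (Icc 0 H) z) →
      Integrable (fun w : ℝ × ℝ × ℝ => |w.2.2| * |g₁ 0 w| * Maxw w) →
      Integrable (fun w : ℝ × ℝ × ℝ => |w.2.2| * |g₁ H w| * Maxw w) →
      Integrable (fun w : ℝ × ℝ × ℝ => |w.2.2| * |g₂ 0 w| * Maxw w) →
      Integrable (fun w : ℝ × ℝ × ℝ => |w.2.2| * |g₂ H w| * Maxw w) →
      (∀ᵐ v : ℝ × ℝ × ℝ, 0 < v.2.2 →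
        g₁ 0 v = Real.sqrt (2 * Real.pi) *
          ∫ w in {w : ℝ × ℝ × ℝ | w.2.2 < 0}, |w.2.2| * g₁ 0 w * Maxw w) →
      (∀ᵐ v : ℝ × ℝ × ℝ, v.2.2 < 0 →
        g₁ H v = Real.sqrt (2 * Real.pi) *
          ∫ w in {w : ℝ × ℝ × ℝ | 0 < w.2.2}, w.2.2 * g₁ H w * Maxw w) →
      (∀ᵐ v : ℝ × ℝ × ℝ, 0 < v.2.2 →
        g₂ 0 v = Real.sqrt (2 * Real.pi) *
          ∫ w in {w : ℝ × ℝ × ℝ | w.2.2 < 0}, |w.2.2| * g₂ 0 w * Maxw w) →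
      (∀ᵐ v : ℝ × ℝ × ℝ, v.2.2 < 0 →
        g₂ H v = Real.sqrt (2 * Real.pi) *
          ∫ w in {w : ℝ × ℝ × ℝ | 0 < w.2.2}, w.2.2 * g₂ H w * Maxw w) →
      (∀ᵐ v : ℝ × ℝ × ℝ, ∀ z ∈ Icc (0:ℝ) H, g₁ z v = g₂ z v)) := by
  constructor
  · intro g _ _ hderiv hbint0 hbintH hb0 hbH
    exact homog H ρ νm hH hρ hνm ν (fun v => (hbounds v).1) g hderiv hbint0 hbintH hb0 hbH
  · intro h _ g₁ g₂ hm1 hm2 _ _ hd1 hd2 hi10 hi1H hi20 hi2H hc10 hc1H hc20 hc2H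
    have hderivG : ∀ᵐ v : ℝ × ℝ × ℝ, v.2.2 ≠ 0 → ∀ z ∈ Icc (0:ℝ) H,
        HasDerivWithinAt (fun z' => g₁ z' v - g₂ z' v)
          (-(ρ * ν v * (g₁ z v - g₂ z v)) / v.2.2) (Icc 0 H) z := by
      filter_upwards [hd1, hd2] with v h1 h2 hv z hz
      have h3 := (h1 hv z hz).sub (h2 hv z hz)
      have h4 : (h z v - ρ * ν v * g₁ z v) / v.2.2 - (h z v - ρ * ν v * g₂ z v) / v.2.2
          = -(ρ * ν v * (g₁ z v - g₂ z v)) / v.2.2 := by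
        rw [div_sub_div_same]; congr 1; ring
      rw [h4] at h3
      exact h3
    have hint0G : Integrable
        (fun w : ℝ × ℝ × ℝ => |w.2.2| * |g₁ 0 w - g₂ 0 w| * Maxw w) := by
      refine (hi10.add hi20).mono'
        (((measurable_snd.snd.abs.mul
          ((hm1.of_uncurry_left).sub (hm2.of_uncurry_left)).abs).mul
          maxw_meas).aestronglyMeasurable)
        (Filter.Eventually.of_forall fun w => ?_)
      have h6 : (0:ℝ) ≤ |w.2.2| * |g₁ 0 w - g₂ 0 w| * Maxw w :=
        mul_nonneg (mul_nonneg (abs_nonneg _) (abs_nonneg _)) (maxw_pos w).le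
      rw [Real.norm_eq_abs, abs_of_nonneg h6, Pi.add_apply]
      have h5 := mul_le_mul_of_nonneg_right
        (mul_le_mul_of_nonneg_left (abs_sub (g₁ 0 w) (g₂ 0 w)) (abs_nonneg w.2.2))
        (maxw_pos w).le
      nlinarith [h5]
    have hintHG : Integrable
        (fun w : ℝ × ℝ × ℝ => |w.2.2| * |g₁ H w - g₂ H w| * Maxw w) := by
      refine (hi1H.add hi2H).mono'
        (((measurable_snd.snd.abs.mul
          ((hm1.of_uncurry_left).sub (hm2.of_uncurry_left)).abs).mul
          maxw_meas).aestronglyMeasurable)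
        (Filter.Eventually.of_forall fun w => ?_)
      have h6 : (0:ℝ) ≤ |w.2.2| * |g₁ H w - g₂ H w| * Maxw w :=
        mul_nonneg (mul_nonneg (abs_nonneg _) (abs_nonneg _)) (maxw_pos w).le
      rw [Real.norm_eq_abs, abs_of_nonneg h6, Pi.add_apply]
      have h5 := mul_le_mul_of_nonneg_right
        (mul_le_mul_of_nonneg_left (abs_sub (g₁ H w) (g₂ H w)) (abs_nonneg w.2.2))
        (maxw_pos w).le
      nlinarith [h5]
    have hb0G : ∀ᵐ v : ℝ × ℝ × ℝ, 0 < v.2.2 →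
        g₁ 0 v - g₂ 0 v = Real.sqrt (2 * Real.pi) *
          ∫ w in {w : ℝ × ℝ × ℝ | w.2.2 < 0}, |w.2.2| * (g₁ 0 w - g₂ 0 w) * Maxw w := by
      filter_upwards [hc10, hc20] with v h1 h2 hv
      rw [h1 hv, h2 hv, ← mul_sub,
        ← integral_sub (integrable_signed_abs _ _ hm1.of_uncurry_left hi10)
          (integrable_signed_abs _ _ hm2.of_uncurry_left hi20)]
      congr 1
      apply integral_congr_ae
      filter_upwards with w
      ring
    have hbHG : ∀ᵐ v : ℝ × ℝ × ℝ, v.2.2 < 0 →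
        g₁ H v - g₂ H v = Real.sqrt (2 * Real.pi) *
          ∫ w in {w : ℝ × ℝ × ℝ | 0 < w.2.2}, w.2.2 * (g₁ H w - g₂ H w) * Maxw w := by
      filter_upwards [hc1H, hc2H] with v h1 h2 hv
      rw [h1 hv, h2 hv, ← mul_sub,
        ← integral_sub (integrable_signed _ _ hm1.of_uncurry_left hi1H)
          (integrable_signed _ _ hm2.of_uncurry_left hi2H)]
      congr 1
      apply integral_congr_ae
      filter_upwards with w
      ring
    have hzero := homog H ρ νm hH hρ hνm ν (fun v => (hbounds v).1)
      (fun z v => g₁ z v - g₂ z v) hderivG hint0G hintHG hb0G hbHG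
    filter_upwards [hzero] with v hv z hz
    have := hv z hz
    simpa [sub_eq_zero] using this
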